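/- The expected generalization error of the Gibbs algorithm is non-negative: for the (α, π, L_E)-Gibbs posterior with α > 0, E_{P_{W,S}}[L_P(W) − L_E(W,S)] ≥ 0. -/

import Mathlib

open MeasureTheory ProbabilityTheory
open scoped ENNReal NNReal

/-- Kullback-Leibler divergence `D(P‖Q) = ∫ log (dP/dQ) dP`. -/
noncomputable def klReal {X : Type*} [MeasurableSpace X] (P Q : Measure X) : ℝ :=
  ∫ x, Real.log (P.rnDeriv Q x).toReal ∂P

lemma gibbs_ptwise {alpha x y u v : ℝ} (hα : 0 < alpha) :
    0 ≤ ((x - u) - (y - v)) *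
      (Real.exp (-alpha * u) * Real.exp (-alpha * y)
        - Real.exp (-alpha * x) * Real.exp (-alpha * v)) := by
  rcases le_total (x - u) (y - v) with h | h
  · have h1 : (x - u) - (y - v) ≤ 0 := by linarith
    have h2 : Real.exp (-alpha * u) * Real.exp (-alpha * y)
        - Real.exp (-alpha * x) * Real.exp (-alpha * v) ≤ 0 := by
      rw [← Real.exp_add, ← Real.exp_add, sub_nonpos, Real.exp_le_exp]
      nlinarith
    nlinarith
  · have h1 : 0 ≤ (x - u) - (y - v) := by linarith
    have h2 : 0 ≤ Real.exp (-alpha * u) * Real.exp (-alpha * y)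
        - Real.exp (-alpha * x) * Real.exp (-alpha * v) := by
      rw [← Real.exp_add, ← Real.exp_add, sub_nonneg, Real.exp_le_exp]
      nlinarith
    nlinarith

lemma gibbs_core_integral {W : Type*} [MeasurableSpace W] (π0 : Measure W)
    [IsProbabilityMeasure π0] {alpha : ℝ} (hα : 0 < alpha)
    {a b : W → ℝ}
    (hFa : Integrable (fun w => Real.exp (-alpha * a w)) π0)
    (hFb : Integrable (fun w => Real.exp (-alpha * b w)) π0)
    (haFa : Integrable (fun w => a w * Real.exp (-alpha * a w)) π0)
    (haFb : Integrable (fun w => a w * Real.exp (-alpha * b w)) π0)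
    (hbFa : Integrable (fun w => b w * Real.exp (-alpha * a w)) π0)
    (hbFb : Integrable (fun w => b w * Real.exp (-alpha * b w)) π0) :
    (∫ w, a w * Real.exp (-alpha * a w) ∂π0) * (∫ w, Real.exp (-alpha * b w) ∂π0)
      + (∫ w, b w * Real.exp (-alpha * b w) ∂π0) * (∫ w, Real.exp (-alpha * a w) ∂π0)
      ≤ (∫ w, a w * Real.exp (-alpha * b w) ∂π0) * (∫ w, Real.exp (-alpha * a w) ∂π0)
      + (∫ w, b w * Real.exp (-alpha * a w) ∂π0) * (∫ w, Real.exp (-alpha * b w) ∂π0) := by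
  set Fa : W → ℝ := fun w => Real.exp (-alpha * a w) with hFa_def
  set Fb : W → ℝ := fun w => Real.exp (-alpha * b w) with hFb_def
  set μ2 : Measure (W × W) := π0.prod π0 with hμ2
  have hP1 : Integrable (fun p : W × W => a p.1 * Fb p.1 * Fa p.2) μ2 := haFb.mul_prod hFa
  have hP4 : Integrable (fun p : W × W => b p.1 * Fa p.1 * Fb p.2) μ2 := hbFa.mul_prod hFb
  have hP6 : Integrable (fun p : W × W => Fa p.1 * (a p.2 * Fb p.2)) μ2 := hFa.mul_prod haFb
  have hP7 : Integrable (fun p : W × W => Fb p.1 * (b p.2 * Fa p.2)) μ2 := hFb.mul_prod hbFa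
  have hN2 : Integrable (fun p : W × W => a p.1 * Fa p.1 * Fb p.2) μ2 := haFa.mul_prod hFb
  have hN3 : Integrable (fun p : W × W => b p.1 * Fb p.1 * Fa p.2) μ2 := hbFb.mul_prod hFa
  have hN5 : Integrable (fun p : W × W => Fb p.1 * (a p.2 * Fa p.2)) μ2 := hFb.mul_prod haFa
  have hN8 : Integrable (fun p : W × W => Fa p.1 * (b p.2 * Fb p.2)) μ2 := hFa.mul_prod hbFb
  have hP12 : Integrable (fun p : W × W => a p.1 * Fb p.1 * Fa p.2
      + b p.1 * Fa p.1 * Fb p.2) μ2 := hP1.add hP4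
  have hP123 : Integrable (fun p : W × W => a p.1 * Fb p.1 * Fa p.2
      + b p.1 * Fa p.1 * Fb p.2 + Fa p.1 * (a p.2 * Fb p.2)) μ2 := hP12.add hP6
  have hPsum : Integrable (fun p : W × W => a p.1 * Fb p.1 * Fa p.2
      + b p.1 * Fa p.1 * Fb p.2 + Fa p.1 * (a p.2 * Fb p.2)
      + Fb p.1 * (b p.2 * Fa p.2)) μ2 := hP123.add hP7
  have hN12 : Integrable (fun p : W × W => a p.1 * Fa p.1 * Fb p.2
      + b p.1 * Fb p.1 * Fa p.2) μ2 := hN2.add hN3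
  have hN123 : Integrable (fun p : W × W => a p.1 * Fa p.1 * Fb p.2
      + b p.1 * Fb p.1 * Fa p.2 + Fb p.1 * (a p.2 * Fa p.2)) μ2 := hN12.add hN5
  have hNsum : Integrable (fun p : W × W => a p.1 * Fa p.1 * Fb p.2
      + b p.1 * Fb p.1 * Fa p.2 + Fb p.1 * (a p.2 * Fa p.2)
      + Fa p.1 * (b p.2 * Fb p.2)) μ2 := hN123.add hN8
  have key : 0 ≤ ∫ p : W × W,
      ((a p.1 * Fb p.1 * Fa p.2 + b p.1 * Fa p.1 * Fb p.2
        + Fa p.1 * (a p.2 * Fb p.2) + Fb p.1 * (b p.2 * Fa p.2))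
      - (a p.1 * Fa p.1 * Fb p.2 + b p.1 * Fb p.1 * Fa p.2
        + Fb p.1 * (a p.2 * Fa p.2) + Fa p.1 * (b p.2 * Fb p.2))) ∂μ2 := by
    apply integral_nonneg
    intro p
    have h := gibbs_ptwise (x := a p.1) (u := b p.1) (y := a p.2) (v := b p.2) hα
    refine le_trans h (le_of_eq ?_)
    simp only [hFa_def, hFb_def]
    ring
  rw [integral_sub hPsum hNsum, integral_add hP123 hP7, integral_add hP12 hP6,
    integral_add hP1 hP4, integral_add hN123 hN8, integral_add hN12 hN5,
    integral_add hN2 hN3, hμ2] at key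
  have e1 := integral_prod_mul (μ := π0) (ν := π0) (fun w => a w * Fb w) Fa
  have e2 := integral_prod_mul (μ := π0) (ν := π0) (fun w => b w * Fa w) Fb
  have e3 := integral_prod_mul (μ := π0) (ν := π0) Fa (fun w => a w * Fb w)
  have e4 := integral_prod_mul (μ := π0) (ν := π0) Fb (fun w => b w * Fa w)
  have e5 := integral_prod_mul (μ := π0) (ν := π0) (fun w => a w * Fa w) Fb
  have e6 := integral_prod_mul (μ := π0) (ν := π0) (fun w => b w * Fb w) Fa
  have e7 := integral_prod_mul (μ := π0) (ν := π0) Fb (fun w => a w * Fa w)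
  have e8 := integral_prod_mul (μ := π0) (ν := π0) Fa (fun w => b w * Fb w)
  linarith [key, e1, e2, e3, e4, e5, e6, e7, e8]

lemma integrable_of_ofReal_lintegral_lt {X : Type*} [MeasurableSpace X] {μ : Measure X}
    {f : X → ℝ} (hf : Measurable f) (h0 : ∀ x, 0 ≤ f x)
    (h : ∫⁻ x, ENNReal.ofReal (f x) ∂μ < ⊤) : Integrable f μ := by
  refine ⟨hf.aestronglyMeasurable, ?_⟩
  rw [hasFiniteIntegral_iff_norm]
  calc ∫⁻ x, ENNReal.ofReal ‖f x‖ ∂μ = ∫⁻ x, ENNReal.ofReal (f x) ∂μ := by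
        congr 1; funext x; rw [Real.norm_of_nonneg (h0 x)]
    _ < ⊤ := h

lemma lintegral_ofReal_lt_of_integrable {X : Type*} [MeasurableSpace X] {μ : Measure X}
    {f : X → ℝ} (hf : Integrable f μ) :
    ∫⁻ x, ENNReal.ofReal (f x) ∂μ < ⊤ := by
  calc ∫⁻ x, ENNReal.ofReal (f x) ∂μ ≤ ∫⁻ x, (‖f x‖₊ : ℝ≥0∞) ∂μ :=
        lintegral_mono fun x => Real.ofReal_le_enorm (f x)
    _ < ⊤ := hf.hasFiniteIntegral

lemma ennnorm_integral_le_lintegral_ofReal {X : Type*} [MeasurableSpace X] {μ : Measure X}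
    {f : X → ℝ} (h0 : ∀ x, 0 ≤ f x) :
    (‖∫ x, f x ∂μ‖₊ : ℝ≥0∞) ≤ ∫⁻ x, ENNReal.ofReal (f x) ∂μ := by
  by_cases hf : Integrable f μ
  · rw [← enorm_eq_nnnorm, Real.enorm_eq_ofReal (integral_nonneg h0),
      ofReal_integral_eq_lintegral_ofReal hf (Filter.Eventually.of_forall h0)]
  · rw [integral_undef hf]
    simp

lemma integral_withDensity_ofReal {W : Type*} [MeasurableSpace W] {π0 : Measure W}
    {r : W → ℝ} (hr : Measurable r) (h0 : ∀ w, 0 ≤ r w) (g : W → ℝ) :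
    ∫ w, g w ∂(π0.withDensity fun w => ENNReal.ofReal (r w))
      = ∫ w, r w * g w ∂π0 := by
  have hmeq : (π0.withDensity fun w => ENNReal.ofReal (r w))
      = π0.withDensity (fun w => ((r w).toNNReal : ℝ≥0∞)) := rfl
  rw [hmeq, integral_withDensity_eq_integral_smul (hr.real_toNNReal) g]
  congr 1
  funext w
  rw [NNReal.smul_def, Real.coe_toNNReal _ (h0 w), smul_eq_mul]

lemma integrable_withDensity_ofReal {W : Type*} [MeasurableSpace W] {π0 : Measure W}
    {r : W → ℝ} (hr : Measurable r) (h0 : ∀ w, 0 ≤ r w) {g : W → ℝ}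
    (hg : Integrable g (π0.withDensity fun w => ENNReal.ofReal (r w))) :
    Integrable (fun w => r w * g w) π0 := by
  have hmeq : (π0.withDensity fun w => ENNReal.ofReal (r w))
      = π0.withDensity (fun w => ((r w).toNNReal : ℝ≥0∞)) := rfl
  rw [hmeq, integrable_withDensity_iff_integrable_smul hr.real_toNNReal] at hg
  convert hg using 2 with w
  rw [NNReal.smul_def, Real.coe_toNNReal _ (h0 w), smul_eq_mul]

lemma gibbs_core_meas {W : Type*} [MeasurableSpace W] (π0 : Measure W)
    [IsProbabilityMeasure π0] {alpha : ℝ} (hα : 0 < alpha)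
    {a b : W → ℝ} (ha : Measurable a) (hb : Measurable b)
    {Va Vb : ℝ}
    (hVa : Va = ∫ w, Real.exp (-alpha * a w) ∂π0) (hVa0 : 0 < Va)
    (hVb : Vb = ∫ w, Real.exp (-alpha * b w) ∂π0) (hVb0 : 0 < Vb)
    (hFa : Integrable (fun w => Real.exp (-alpha * a w)) π0)
    (hFb : Integrable (fun w => Real.exp (-alpha * b w)) π0)
    {μa μb : Measure W}
    (hμa : μa = π0.withDensity fun w => ENNReal.ofReal (Real.exp (-alpha * a w) / Va))
    (hμb : μb = π0.withDensity fun w => ENNReal.ofReal (Real.exp (-alpha * b w) / Vb))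
    (haa : Integrable a μa) (hab : Integrable a μb)
    (hba : Integrable b μa) (hbb : Integrable b μb) :
    ∫ w, a w ∂μa + ∫ w, b w ∂μb ≤ ∫ w, a w ∂μb + ∫ w, b w ∂μa := by
  have hVane : Va ≠ 0 := ne_of_gt hVa0
  have hVbne : Vb ≠ 0 := ne_of_gt hVb0
  have hra : Measurable fun w => Real.exp (-alpha * a w) / Va :=
    (Real.measurable_exp.comp (ha.const_mul (-alpha))).div_const Va
  have hrb : Measurable fun w => Real.exp (-alpha * b w) / Vb :=
    (Real.measurable_exp.comp (hb.const_mul (-alpha))).div_const Vb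
  have h0a : ∀ w, 0 ≤ Real.exp (-alpha * a w) / Va :=
    fun w => div_nonneg (Real.exp_nonneg _) hVa0.le
  have h0b : ∀ w, 0 ≤ Real.exp (-alpha * b w) / Vb :=
    fun w => div_nonneg (Real.exp_nonneg _) hVb0.le
  have iaa : Integrable (fun w => a w * Real.exp (-alpha * a w)) π0 := by
    have h := (integrable_withDensity_ofReal hra h0a (g := a)
      (by rw [← hμa]; exact haa)).mul_const Va
    refine h.congr (Filter.Eventually.of_forall fun w => ?_)
    field_simp
  have iab : Integrable (fun w => a w * Real.exp (-alpha * b w)) π0 := by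
    have h := (integrable_withDensity_ofReal hrb h0b (g := a)
      (by rw [← hμb]; exact hab)).mul_const Vb
    refine h.congr (Filter.Eventually.of_forall fun w => ?_)
    field_simp
  have iba : Integrable (fun w => b w * Real.exp (-alpha * a w)) π0 := by
    have h := (integrable_withDensity_ofReal hra h0a (g := b)
      (by rw [← hμa]; exact hba)).mul_const Va
    refine h.congr (Filter.Eventually.of_forall fun w => ?_)
    field_simp
  have ibb : Integrable (fun w => b w * Real.exp (-alpha * b w)) π0 := by
    have h := (integrable_withDensity_ofReal hrb h0b (g := b)
      (by rw [← hμb]; exact hbb)).mul_const Vb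
    refine h.congr (Filter.Eventually.of_forall fun w => ?_)
    field_simp
  have core := gibbs_core_integral π0 hα hFa hFb iaa iab iba ibb
  have eaa : ∫ w, a w ∂μa = (∫ w, a w * Real.exp (-alpha * a w) ∂π0) * Va⁻¹ := by
    rw [hμa, integral_withDensity_ofReal hra h0a, ← integral_mul_const]
    congr 1; funext w; field_simp
  have eab : ∫ w, a w ∂μb = (∫ w, a w * Real.exp (-alpha * b w) ∂π0) * Vb⁻¹ := by
    rw [hμb, integral_withDensity_ofReal hrb h0b, ← integral_mul_const]
    congr 1; funext w; field_simp
  have eba : ∫ w, b w ∂μa = (∫ w, b w * Real.exp (-alpha * a w) ∂π0) * Va⁻¹ := by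
    rw [hμa, integral_withDensity_ofReal hra h0a, ← integral_mul_const]
    congr 1; funext w; field_simp
  have ebb : ∫ w, b w ∂μb = (∫ w, b w * Real.exp (-alpha * b w) ∂π0) * Vb⁻¹ := by
    rw [hμb, integral_withDensity_ofReal hrb h0b, ← integral_mul_const]
    congr 1; funext w; field_simp
  rw [eaa, eab, eba, ebb, ← sub_nonneg]
  have expand : (∫ w, a w * Real.exp (-alpha * b w) ∂π0) * Vb⁻¹
      + (∫ w, b w * Real.exp (-alpha * a w) ∂π0) * Va⁻¹
      - ((∫ w, a w * Real.exp (-alpha * a w) ∂π0) * Va⁻¹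
      + (∫ w, b w * Real.exp (-alpha * b w) ∂π0) * Vb⁻¹)
      = ((∫ w, a w * Real.exp (-alpha * b w) ∂π0) * (∫ w, Real.exp (-alpha * a w) ∂π0)
      + (∫ w, b w * Real.exp (-alpha * a w) ∂π0) * (∫ w, Real.exp (-alpha * b w) ∂π0)
      - ((∫ w, a w * Real.exp (-alpha * a w) ∂π0) * (∫ w, Real.exp (-alpha * b w) ∂π0)
      + (∫ w, b w * Real.exp (-alpha * b w) ∂π0) * (∫ w, Real.exp (-alpha * a w) ∂π0)))
        * (Va⁻¹ * Vb⁻¹) := by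
    rw [← hVa, ← hVb]; field_simp
  rw [expand]
  have h2 : (0:ℝ) < Va⁻¹ * Vb⁻¹ := mul_pos (inv_pos.mpr hVa0) (inv_pos.mpr hVb0)
  nlinarith [core, h2]

/-- The expected generalization error of the `(α, π, L_E)`-Gibbs algorithm
`P_{W|S=s} = π(w) e^{−α L_E(w,s)} / V(s,α)` is non-negative:
`E_{P_{W,S}}[L_P(W) − L_E(W,S)] ≥ 0`. -/
theorem stmt_5 {W Z : Type*} [MeasurableSpace W] [MeasurableSpace Z]
    (n : ℕ) (hn : 0 < n)
    (μS : Measure (Fin n → Z)) [IsProbabilityMeasure μS]  -- law `P_S` of the samples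
    (ℓ : W → Z → ℝ) (hℓmeas : Measurable (Function.uncurry ℓ)) (hℓpos : ∀ w z, 0 ≤ ℓ w z)
    (alpha : ℝ) (halpha : 0 < alpha)
    (π0 : Measure W) [IsProbabilityMeasure π0]  -- the prior `π`
    (LE : W → (Fin n → Z) → ℝ) (hLE : ∀ w s, LE w s = (1 / (n : ℝ)) * ∑ i, ℓ w (s i))
    (LP : W → ℝ) (hLP : ∀ w, LP w = ∫ s, LE w s ∂μS)
    (V : (Fin n → Z) → ℝ) (hV : ∀ s, V s = ∫ w, Real.exp (-alpha * LE w s) ∂π0)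
    (hVpos : ∀ s, 0 < V s)
    (hVint : ∀ s, Integrable (fun w => Real.exp (-alpha * LE w s)) π0)
    (κ : ProbabilityTheory.Kernel (Fin n → Z) W) [IsMarkovKernel κ]
    (hκ : ∀ s, κ s =
      π0.withDensity (fun w => ENNReal.ofReal (Real.exp (-alpha * LE w s) / V s)))
    -- absolute continuity and integrability conditions
    (hac : (μS ⊗ₘ κ) ≪ μS.prod (μS ⊗ₘ κ).snd)
    (hac' : μS.prod (μS ⊗ₘ κ).snd ≪ (μS ⊗ₘ κ))
    (hint1 : Integrable
      (fun p => Real.log (((μS ⊗ₘ κ).rnDeriv (μS.prod (μS ⊗ₘ κ).snd)) p).toReal) (μS ⊗ₘ κ))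
    (hint2 : Integrable
      (fun p => Real.log (((μS.prod (μS ⊗ₘ κ).snd).rnDeriv (μS ⊗ₘ κ)) p).toReal)
      (μS.prod (μS ⊗ₘ κ).snd))
    (hint3 : Integrable (fun p => LE p.2 p.1) (μS ⊗ₘ κ))
    (hint4 : Integrable (fun p => LE p.2 p.1) (μS.prod (μS ⊗ₘ κ).snd))
    (hint5 : ∀ w, Integrable (LE w) μS) :
    0 ≤ ∫ p, (LP p.2 - LE p.2 p.1) ∂(μS ⊗ₘ κ) := by
  classical
  -- basic measurability and positivity facts
  have hLEunc : Measurable (Function.uncurry LE) := by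
    have heq : Function.uncurry LE
        = fun p : W × (Fin n → Z) => (1 / (n : ℝ)) * ∑ i, ℓ p.1 (p.2 i) := by
      funext p; exact hLE p.1 p.2
    rw [heq]
    exact (Finset.measurable_sum Finset.univ fun i _ =>
      hℓmeas.comp (measurable_fst.prodMk
        ((measurable_pi_apply i).comp measurable_snd))).const_mul _
  have hLEpos : ∀ w s, 0 ≤ LE w s := fun w s => by
    rw [hLE]
    exact mul_nonneg (by positivity) (Finset.sum_nonneg fun i _ => hℓpos _ _)
  have hLEm2 : Measurable fun p : (Fin n → Z) × W => LE p.2 p.1 :=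
    hLEunc.comp (measurable_snd.prodMk measurable_fst)
  have hLm : Measurable fun p : (Fin n → Z) × W => ENNReal.ofReal (LE p.2 p.1) :=
    ENNReal.measurable_ofReal.comp hLEm2
  have hLEs : ∀ s, Measurable fun w => LE w s := fun s =>
    hLEunc.comp (measurable_id.prodMk measurable_const)
  set ν : Measure W := (μS ⊗ₘ κ).snd with hν
  set m2 : Measure ((Fin n → Z) × (Fin n → Z)) := μS.prod μS with hm2
  -- N s t = lintegral of LE(·,s) against κ t ; T s t = integral
  set N : (Fin n → Z) → (Fin n → Z) → ℝ≥0∞ :=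
    fun s t => ∫⁻ w, ENNReal.ofReal (LE w s) ∂κ t with hNdef
  set T : (Fin n → Z) → (Fin n → Z) → ℝ := fun s t => ∫ w, LE w s ∂κ t with hTdef
  have hNmeas : Measurable fun q : (Fin n → Z) × (Fin n → Z) => N q.1 q.2 := by
    have hf : Measurable fun r : ((Fin n → Z) × (Fin n → Z)) × W =>
        ENNReal.ofReal (LE r.2 r.1.1) :=
      ENNReal.measurable_ofReal.comp
        (hLEunc.comp (measurable_snd.prodMk measurable_fst.fst))
    exact Measurable.lintegral_kernel_prod_right'
      (κ := κ.comap Prod.snd measurable_snd) hf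
  have hTmeas : StronglyMeasurable fun q : (Fin n → Z) × (Fin n → Z) => T q.1 q.2 :=
    StronglyMeasurable.integral_kernel_prod_right'
      (κ := κ.comap Prod.snd measurable_snd)
      ((hLEunc.comp (measurable_snd.prodMk measurable_fst.fst)).stronglyMeasurable)
  have hTnn : ∀ s t, 0 ≤ T s t := fun s t => integral_nonneg fun w => hLEpos w s
  have hTle : ∀ s t, (‖T s t‖₊ : ℝ≥0∞) ≤ N s t := fun s t =>
    ennnorm_integral_le_lintegral_ofReal fun w => hLEpos w s
  -- finiteness facts
  have hF3 : ∫⁻ s, N s s ∂μS < ⊤ := by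
    have h := lintegral_ofReal_lt_of_integrable hint3
    rwa [Measure.lintegral_compProd hLm] at h
  have hνlint : ∀ s, ∫⁻ w, ENNReal.ofReal (LE w s) ∂ν = ∫⁻ t, N s t ∂μS := by
    intro s
    rw [hν, Measure.snd,
      lintegral_map (hLEs s).ennreal_ofReal measurable_snd,
      Measure.lintegral_compProd (f := fun p : (Fin n → Z) × W => ENNReal.ofReal (LE p.2 s))
        (((hLEs s).comp measurable_snd).ennreal_ofReal)]
  have hF4 : ∫⁻ q, N q.1 q.2 ∂m2 < ⊤ := by
    have h := lintegral_ofReal_lt_of_integrable hint4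
    rw [lintegral_prod _ hLm.aemeasurable] at h
    rw [hm2, lintegral_prod _ hNmeas.aemeasurable]
    calc ∫⁻ s, ∫⁻ t, N s t ∂μS ∂μS
        = ∫⁻ s, ∫⁻ w, ENNReal.ofReal (LE w s) ∂ν ∂μS :=
          lintegral_congr fun s => (hνlint s).symm
      _ < ⊤ := h
  have hF4' : ∫⁻ q, N q.2 q.1 ∂m2 < ⊤ := by
    have h := lintegral_prod_swap (μ := μS) (ν := μS) (fun q => N q.1 q.2)
    calc ∫⁻ q, N q.2 q.1 ∂m2 = ∫⁻ q, N q.1 q.2 ∂m2 := h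
      _ < ⊤ := hF4
  have hF11 : ∫⁻ q, N q.1 q.1 ∂m2 < ⊤ := by
    rw [hm2, lintegral_prod (fun q => N q.1 q.1)
      (hNmeas.comp (measurable_fst.prodMk measurable_fst)).aemeasurable]
    simp only [lintegral_const, measure_univ, mul_one]
    exact hF3
  have hF22 : ∫⁻ q, N q.2 q.2 ∂m2 < ⊤ := by
    rw [hm2, lintegral_prod (fun q => N q.2 q.2)
      (hNmeas.comp (measurable_snd.prodMk measurable_snd)).aemeasurable]
    simp only [lintegral_const, measure_univ, mul_one]
    exact hF3
  -- almost-everywhere finiteness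
  have hae12 : ∀ᵐ q ∂m2, N q.1 q.2 < ⊤ := ae_lt_top hNmeas hF4.ne
  have hae21 : ∀ᵐ q ∂m2, N q.2 q.1 < ⊤ :=
    ae_lt_top (hNmeas.comp measurable_swap) hF4'.ne
  have hae11 : ∀ᵐ q ∂m2, N q.1 q.1 < ⊤ :=
    ae_lt_top (hNmeas.comp (measurable_fst.prodMk measurable_fst)) hF11.ne
  have hae22 : ∀ᵐ q ∂m2, N q.2 q.2 < ⊤ :=
    ae_lt_top (hNmeas.comp (measurable_snd.prodMk measurable_snd)) hF22.ne
  -- integrability of the T functions on m2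
  have hint12 : Integrable (fun q => T q.1 q.2) m2 :=
    ⟨hTmeas.aestronglyMeasurable,
      lt_of_le_of_lt (lintegral_mono fun q => hTle q.1 q.2) hF4⟩
  have hint21 : Integrable (fun q => T q.2 q.1) m2 :=
    ⟨(hTmeas.comp_measurable measurable_swap).aestronglyMeasurable,
      lt_of_le_of_lt (lintegral_mono fun q => hTle q.2 q.1) hF4'⟩
  have hint11 : Integrable (fun q => T q.1 q.1) m2 :=
    ⟨(hTmeas.comp_measurable (measurable_fst.prodMk measurable_fst)).aestronglyMeasurable,
      lt_of_le_of_lt (lintegral_mono fun q => hTle q.1 q.1) hF11⟩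
  have hint22 : Integrable (fun q => T q.2 q.2) m2 :=
    ⟨(hTmeas.comp_measurable (measurable_snd.prodMk measurable_snd)).aestronglyMeasurable,
      lt_of_le_of_lt (lintegral_mono fun q => hTle q.2 q.2) hF22⟩
  -- integrability of LP ∘ snd
  have hLP0 : ∀ w, 0 ≤ LP w := fun w => by
    rw [hLP]; exact integral_nonneg fun s => hLEpos w s
  have hLPsm : StronglyMeasurable LP := by
    have heq : LP = fun w => ∫ s, LE w s ∂μS := funext hLP
    rw [heq]
    exact hLEunc.stronglyMeasurable.integral_prod_right'
  have hLPof : ∀ w, ENNReal.ofReal (LP w) = ∫⁻ s, ENNReal.ofReal (LE w s) ∂μS := fun w => by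
    rw [hLP, ofReal_integral_eq_lintegral_ofReal (hint5 w)
      (Filter.Eventually.of_forall fun s => hLEpos w s)]
  have hintLP : Integrable (fun p : (Fin n → Z) × W => LP p.2) (μS ⊗ₘ κ) := by
    refine ⟨(hLPsm.comp_measurable measurable_snd).aestronglyMeasurable, ?_⟩
    rw [hasFiniteIntegral_iff_norm]
    have e0 : ∫⁻ p, ENNReal.ofReal ‖LP p.2‖ ∂(μS ⊗ₘ κ)
        = ∫⁻ p : (Fin n → Z) × W, ∫⁻ t, ENNReal.ofReal (LE p.2 t) ∂μS ∂(μS ⊗ₘ κ) := by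
      apply lintegral_congr fun p => ?_
      rw [Real.norm_of_nonneg (hLP0 p.2), hLPof p.2]
    have hg : Measurable fun w => ∫⁻ t, ENNReal.ofReal (LE w t) ∂μS :=
      (ENNReal.measurable_ofReal.comp hLEunc).lintegral_prod_right'
    rw [e0, Measure.lintegral_compProd
      (f := fun p : (Fin n → Z) × W => ∫⁻ t, ENNReal.ofReal (LE p.2 t) ∂μS)
      (hg.comp measurable_snd)]
    calc ∫⁻ s, ∫⁻ w, ∫⁻ t, ENNReal.ofReal (LE w t) ∂μS ∂κ s ∂μS
        = ∫⁻ s, ∫⁻ t, N t s ∂μS ∂μS := by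
          refine lintegral_congr fun s => ?_
          exact lintegral_lintegral_swap (ENNReal.measurable_ofReal.comp hLEunc).aemeasurable
      _ = ∫⁻ q, N q.2 q.1 ∂m2 := by
          rw [hm2, lintegral_prod (fun q => N q.2 q.1)
            (hNmeas.comp measurable_swap).aemeasurable]
      _ < ⊤ := hF4'
  -- main computation
  have eq2 : ∫ p, LE p.2 p.1 ∂(μS ⊗ₘ κ) = ∫ s, T s s ∂μS := by
    rw [Measure.integral_compProd hint3]
  have eq3 : ∫ p, LP p.2 ∂(μS ⊗ₘ κ) = ∫ s, ∫ w, LP w ∂κ s ∂μS :=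
    Measure.integral_compProd hintLP
  -- a.e. swap of the inner double integral
  have hswapfin : ∀ᵐ s ∂μS, ∫⁻ t, N t s ∂μS < ⊤ := by
    have hmeas2 : Measurable fun s => ∫⁻ t, N t s ∂μS := by
      refine Measurable.lintegral_prod_right' (f := fun q => N q.2 q.1) ?_
      exact hNmeas.comp measurable_swap
    refine ae_lt_top hmeas2 ?_
    have : ∫⁻ s, ∫⁻ t, N t s ∂μS ∂μS = ∫⁻ q, N q.2 q.1 ∂m2 := by
      rw [hm2, lintegral_prod (fun q => N q.2 q.1) (hNmeas.comp measurable_swap).aemeasurable]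
    rw [this]
    exact hF4'.ne
  have swap_ae : ∀ᵐ s ∂μS, ∫ w, LP w ∂κ s = ∫ t, T t s ∂μS := by
    filter_upwards [hswapfin] with s hs
    have hintun : Integrable (Function.uncurry LE) ((κ s).prod μS) := by
      refine integrable_of_ofReal_lintegral_lt hLEunc (fun p => hLEpos p.1 p.2) ?_
      rw [lintegral_prod (fun p => ENNReal.ofReal (Function.uncurry LE p))
        hLEunc.ennreal_ofReal.aemeasurable]
      have hsw : ∫⁻ w, ∫⁻ t, ENNReal.ofReal (LE w t) ∂μS ∂κ s
          = ∫⁻ t, ∫⁻ w, ENNReal.ofReal (LE w t) ∂κ s ∂μS :=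
        lintegral_lintegral_swap hLEunc.ennreal_ofReal.aemeasurable
      calc ∫⁻ w, ∫⁻ t, ENNReal.ofReal (Function.uncurry LE (w, t)) ∂μS ∂κ s
          = ∫⁻ t, ∫⁻ w, ENNReal.ofReal (LE w t) ∂κ s ∂μS := hsw
        _ = ∫⁻ t, N t s ∂μS := rfl
        _ < ⊤ := hs
    have hswap := integral_integral_swap (f := LE) (μ := κ s) (ν := μS) hintun
    calc ∫ w, LP w ∂κ s = ∫ w, ∫ t, LE w t ∂μS ∂κ s := by
          refine integral_congr_ae (Filter.Eventually.of_forall fun w => ?_)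
          exact hLP w
      _ = ∫ t, ∫ w, LE w t ∂κ s ∂μS := hswap
      _ = ∫ t, T t s ∂μS := rfl
  have eq4 : ∫ s, ∫ w, LP w ∂κ s ∂μS = ∫ s, ∫ t, T t s ∂μS ∂μS :=
    integral_congr_ae swap_ae
  have eq5 : ∫ s, ∫ t, T t s ∂μS ∂μS = ∫ q, T q.2 q.1 ∂m2 := by
    rw [hm2]
    exact integral_integral (f := fun s t => T t s) hint21
  have eq6 : ∫ s, T s s ∂μS = ∫ q, T q.1 q.1 ∂m2 := by
    rw [hm2, integral_prod (fun q => T q.1 q.1) hint11]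
    simp [integral_const, measure_univ]
  have G12 : ∫ p, (LP p.2 - LE p.2 p.1) ∂(μS ⊗ₘ κ)
      = ∫ q, (T q.2 q.1 - T q.1 q.1) ∂m2 := by
    rw [integral_sub hintLP hint3, eq3, eq4, eq5, eq2, eq6,
      ← integral_sub hint21 hint11]
  have G21 : ∫ q, (T q.2 q.1 - T q.1 q.1) ∂m2 = ∫ q, (T q.1 q.2 - T q.2 q.2) ∂m2 := by
    have h := integral_prod_swap (μ := μS) (ν := μS)
      (fun q : (Fin n → Z) × (Fin n → Z) => T q.1 q.2 - T q.2 q.2)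
    rw [hm2]
    exact h
  have sum_eq : ∫ q, (T q.2 q.1 - T q.1 q.1) ∂m2 + ∫ q, (T q.1 q.2 - T q.2 q.2) ∂m2
      = ∫ q, ((T q.2 q.1 - T q.1 q.1) + (T q.1 q.2 - T q.2 q.2)) ∂m2 :=
    (integral_add (hint21.sub hint11) (hint12.sub hint22)).symm
  have pos : 0 ≤ ∫ q, ((T q.2 q.1 - T q.1 q.1) + (T q.1 q.2 - T q.2 q.2)) ∂m2 := by
    apply integral_nonneg_of_ae
    filter_upwards [hae12, hae21, hae11, hae22] with q h12 h21 h11 h22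
    simp only [Pi.zero_apply]
    have ia1 : Integrable (fun w => LE w q.1) (κ q.1) :=
      integrable_of_ofReal_lintegral_lt (hLEs q.1) (fun w => hLEpos w q.1) h11
    have ia2 : Integrable (fun w => LE w q.1) (κ q.2) :=
      integrable_of_ofReal_lintegral_lt (hLEs q.1) (fun w => hLEpos w q.1) h12
    have ib1 : Integrable (fun w => LE w q.2) (κ q.1) :=
      integrable_of_ofReal_lintegral_lt (hLEs q.2) (fun w => hLEpos w q.2) h21
    have ib2 : Integrable (fun w => LE w q.2) (κ q.2) :=
      integrable_of_ofReal_lintegral_lt (hLEs q.2) (fun w => hLEpos w q.2) h22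
    have key := gibbs_core_meas π0 halpha (a := fun w => LE w q.1) (b := fun w => LE w q.2)
      (hLEs q.1) (hLEs q.2) (hV q.1) (hVpos q.1) (hV q.2) (hVpos q.2)
      (hVint q.1) (hVint q.2) (hκ q.1) (hκ q.2) ia1 ia2 ib1 ib2
    have e1 : ∫ w, LE w q.1 ∂κ q.1 = T q.1 q.1 := rfl
    have e2 : ∫ w, LE w q.2 ∂κ q.2 = T q.2 q.2 := rfl
    have e3 : ∫ w, LE w q.1 ∂κ q.2 = T q.1 q.2 := rfl
    have e4 : ∫ w, LE w q.2 ∂κ q.1 = T q.2 q.1 := rfl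
    rw [e1, e2, e3, e4] at key
    linarith [key]
  linarith [pos, sum_eq, G12, G21]
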